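/- Let n be odd and let s ∈ F_{2^{2n}} satisfy s^{(2^n+1)/3} = 1 and s ≠ 1. Then ξ = s + s^{-1} lies in the subfield F_{2^n}, ξ ≠ 0, and the polynomial x^3 + x + ξ has three distinct roots in F_{2^n}. -/

import Mathlib

lemma aux_sq_one {E : Type*} [Field E] (h2 : (2:E) = 0) {s : E} (hs2 : s ^ 2 = 1) :
    s = 1 := by
  have h0 : (s - 1) ^ 2 = 0 := by linear_combination hs2 + (1 - s) * h2
  have := pow_eq_zero_iff (n := 2) (by norm_num) |>.mp h0
  linear_combination this

lemma aux_eq1 {E : Type*} [Field E] (h2 : (2:E) = 0) (s c w : E)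
    (hc : c ≠ 0) (hw0 : w ≠ 0) (hw1 : w ≠ 1) (hc3 : c ^ 3 = s) (hw3 : w ^ 3 = 1)
    (h : c * w + (c * w)⁻¹ = c + c⁻¹) : s = 1 := by
  have key0 : c * ((w - 1) * (c ^ 2 * w - 1)) = 0 := by
    field_simp at h
    linear_combination c * h
  have key := (mul_eq_zero.mp key0).resolve_left hc
  have hcw : c ^ 2 * w = 1 := by
    rcases mul_eq_zero.mp key with h1 | h1
    · exact absurd (by linear_combination h1) hw1
    · linear_combination h1
  apply aux_sq_one h2
  calc s ^ 2 = c ^ 6 * w ^ 3 := by rw [hw3, mul_one, ← hc3]; ring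
  _ = (c ^ 2 * w) ^ 3 := by ring
  _ = 1 := by rw [hcw, one_pow]

lemma aux_root {E : Type*} [Field E] (h2 : (2:E) = 0) (s u : E)
    (hu : u ≠ 0) (hu3 : u ^ 3 = s) : (u + u⁻¹) ^ 3 + (u + u⁻¹) + (s + s⁻¹) = 0 := by
  subst hu3
  field_simp
  ring_nf
  linear_combination (1 + 2 * u ^ 2 + 2 * u ^ 4 + u ^ 6) * h2

lemma aux_frob {E : Type*} [Field E] [CharP E 2] (n : ℕ) (u : E)
    (_hu : u ≠ 0) (hu1 : u ^ (2 ^ n + 1) = 1) : (u + u⁻¹) ^ (2 ^ n) = u + u⁻¹ := by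
  haveI : Fact (Nat.Prime 2) := ⟨Nat.prime_two⟩
  have h3 : u ^ (2 ^ n) = u⁻¹ := by
    apply eq_inv_of_mul_eq_one_right
    rw [mul_comm, ← pow_succ]; exact hu1
  rw [add_pow_char_pow, h3, inv_pow, h3, inv_inv, add_comm]

theorem stmt_12 (n : ℕ) (hn : Odd n) (E : Type*) [Field E] [Fintype E]
    (hE : Fintype.card E = 2 ^ (2 * n)) (s : E)
    (hs : s ^ ((2 ^ n + 1) / 3) = 1) (hs1 : s ≠ 1) :
    (s + s⁻¹) ^ (2 ^ n) = s + s⁻¹ ∧ s + s⁻¹ ≠ 0 ∧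
    ∃ x y z : E, x ≠ y ∧ x ≠ z ∧ y ≠ z ∧
      x ^ (2 ^ n) = x ∧ y ^ (2 ^ n) = y ∧ z ^ (2 ^ n) = z ∧
      x ^ 3 + x + (s + s⁻¹) = 0 ∧ y ^ 3 + y + (s + s⁻¹) = 0 ∧
      z ^ 3 + z + (s + s⁻¹) = 0 := by
  haveI := Classical.decEq E
  have hn1 : 1 ≤ n := hn.pos
  have h2nge : (2:ℕ) ≤ 2 ^ n := by
    calc (2:ℕ) = 2 ^ 1 := rfl
    _ ≤ 2 ^ n := Nat.pow_le_pow_right (by norm_num) hn1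
  -- characteristic 2
  obtain ⟨p, hp⟩ := CharP.exists E
  haveI := hp
  obtain ⟨m, hpp, hcard⟩ := FiniteField.card E p
  have hp2 : p = 2 := by
    have h1 : p ∣ 2 ^ (2 * n) := by
      rw [← hE, hcard]; exact dvd_pow_self p m.ne_zero
    have h2 := hpp.dvd_of_dvd_pow h1
    exact (Nat.prime_dvd_prime_iff_eq hpp Nat.prime_two).mp h2
  subst hp2
  haveI : CharP E 2 := hp
  have h2 : (2:E) = 0 := by exact_mod_cast CharP.cast_eq_zero E 2
  -- 3 ∣ 2^n + 1
  have h3dvd : 3 ∣ 2 ^ n + 1 := by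
    obtain ⟨k, hk⟩ := hn
    have h4 : 4 ^ k % 3 = 1 := by rw [Nat.pow_mod]; norm_num
    have hpow : 2 ^ n = 4 ^ k * 2 := by
      subst hk; rw [pow_succ, pow_mul]; norm_num
    omega
  set d := (2 ^ n + 1) / 3 with hd
  have h3d : 3 * d = 2 ^ n + 1 := Nat.mul_div_cancel' h3dvd
  have hd1 : 1 ≤ d := by omega
  have hs0 : s ≠ 0 := by
    intro h; rw [h, zero_pow (by omega)] at hs; exact zero_ne_one hs
  -- basic power facts for s
  have hsP : s ^ (2 ^ n + 1) = 1 := by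
    rw [← h3d, mul_comm, pow_mul, hs, one_pow]
  -- card of units
  have h1le : 1 ≤ 2 ^ (2 * n) := Nat.one_le_two_pow
  have hcardU : Fintype.card Eˣ = 2 ^ (2 * n) - 1 := by
    rw [Fintype.card_units, hE]
  have h3dZ : (3:ℤ) * d = 2 ^ n + 1 := by exact_mod_cast h3d
  have hsq : ((2:ℤ) ^ n) * 2 ^ n = 2 ^ (2 * n) := by
    rw [two_mul, pow_add]
  have hNz : (Fintype.card Eˣ : ℤ) = 3 * d * (2 ^ n - 1) := by
    rw [hcardU]
    push_cast [h1le]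
    linear_combination (1 - (2:ℤ) ^ n) * h3dZ - hsq
  -- cyclic group setup
  obtain ⟨g, hg⟩ := IsCyclic.exists_generator (α := Eˣ)
  have horder : orderOf g = Fintype.card Eˣ := by
    rw [orderOf_eq_card_of_forall_mem_zpowers hg, Nat.card_eq_fintype_card]
  have hgcard : g ^ ((Fintype.card Eˣ : ℤ)) = 1 := by
    rw [zpow_natCast, pow_card_eq_one]
  set su : Eˣ := Units.mk0 s hs0 with hsu
  obtain ⟨k, hk⟩ := hg su
  replace hk : g ^ k = su := hk
  have hsud : su ^ d = 1 := by
    apply Units.ext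
    rw [Units.val_pow_eq_pow_val]
    exact hs
  have hdvd : (Fintype.card Eˣ : ℤ) ∣ k * d := by
    rw [← horder, orderOf_dvd_iff_zpow_eq_one, zpow_mul, hk, zpow_natCast, hsud]
  have hdvd2 : (3 * ((2:ℤ) ^ n - 1)) ∣ k := by
    have hdz : (d:ℤ) ≠ 0 := by exact_mod_cast Nat.one_le_iff_ne_zero.mp hd1
    have h' : (3 * ((2:ℤ) ^ n - 1)) * d ∣ k * d := by
      rw [show (3 * ((2:ℤ) ^ n - 1)) * d = 3 * d * (2 ^ n - 1) by ring, ← hNz]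
      exact hdvd
    exact (mul_dvd_mul_iff_right hdz).mp h'
  obtain ⟨q, hq⟩ := hdvd2
  set c : Eˣ := g ^ (((2:ℤ) ^ n - 1) * q) with hcdef
  have hc3 : c ^ 3 = su := by
    rw [hcdef, ← zpow_natCast, ← zpow_mul]
    rw [show ((2:ℤ) ^ n - 1) * q * ((3:ℕ):ℤ) = k by rw [hq]; push_cast; ring, hk]
  have hcP : c ^ (2 ^ n + 1) = 1 := by
    rw [hcdef, ← zpow_natCast, ← zpow_mul]
    rw [show ((2:ℤ) ^ n - 1) * q * (((2 ^ n + 1 : ℕ)):ℤ) = (Fintype.card Eˣ : ℤ) * q by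
      rw [hNz]; push_cast [← h3dZ]; ring]
    rw [zpow_mul, hgcard, one_zpow]
  set w : Eˣ := g ^ ((d:ℤ) * ((2:ℤ) ^ n - 1)) with hwdef
  have hw3 : w ^ 3 = 1 := by
    rw [hwdef, ← zpow_natCast, ← zpow_mul]
    rw [show (d:ℤ) * ((2:ℤ) ^ n - 1) * ((3:ℕ):ℤ) = (Fintype.card Eˣ : ℤ) by
      rw [hNz]; push_cast; ring]
    exact hgcard
  have hw1 : w ≠ 1 := by
    intro hw
    have hdvdw : (orderOf g : ℤ) ∣ (d:ℤ) * ((2:ℤ) ^ n - 1) :=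
      orderOf_dvd_iff_zpow_eq_one.mpr hw
    rw [horder, hNz] at hdvdw
    have hMpos : (0:ℤ) < (2:ℤ) ^ n - 1 := by
      have : (2:ℤ) ≤ 2 ^ n := by exact_mod_cast h2nge
      omega
    have hdpos : (0:ℤ) < d := by exact_mod_cast hd1
    have hle := Int.le_of_dvd (by positivity) hdvdw
    nlinarith
  -- push to E
  set C : E := (c : E) with hC
  set W : E := (w : E) with hW
  have hC0 : C ≠ 0 := c.ne_zero
  have hW0 : W ≠ 0 := w.ne_zero
  have hC3 : C ^ 3 = s := by
    rw [hC, ← Units.val_pow_eq_pow_val, hc3, hsu, Units.val_mk0]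
  have hCP : C ^ (2 ^ n + 1) = 1 := by
    rw [hC, ← Units.val_pow_eq_pow_val, hcP, Units.val_one]
  have hW3 : W ^ 3 = 1 := by
    rw [hW, ← Units.val_pow_eq_pow_val, hw3, Units.val_one]
  have hW1 : W ≠ 1 := fun h => hw1 (Units.ext (by rw [← hW, h, Units.val_one]))
  have hWP : W ^ (2 ^ n + 1) = 1 := by
    rw [← h3d, pow_mul, hW3, one_pow]
  -- W^2 facts
  have hW21 : W ^ 2 ≠ 1 := by
    intro h
    apply hW1
    calc W = W * W ^ 2 := by rw [h, mul_one]
    _ = W ^ 3 := by ring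
    _ = 1 := hW3
  have hW23 : (W ^ 2) ^ 3 = 1 := by rw [← pow_mul, show 2*3 = 3*2 by ring, pow_mul, hW3, one_pow]
  have hW20 : W ^ 2 ≠ 0 := pow_ne_zero 2 hW0
  -- the three roots
  refine ⟨aux_frob n s hs0 hsP, ?_, C + C⁻¹, C * W + (C * W)⁻¹, C * W ^ 2 + (C * W ^ 2)⁻¹,
    ?_, ?_, ?_, ?_, ?_, ?_, ?_, ?_, ?_⟩
  · -- s + s⁻¹ ≠ 0
    intro h
    apply hs1
    apply aux_sq_one h2
    have h' : s * s + 1 = 0 := by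
      have h'' := congrArg (· * s) h
      simp only [add_mul, zero_mul] at h''
      rw [inv_mul_cancel₀ hs0] at h''
      exact h''
    linear_combination h' - h2
  · intro h
    exact hs1 (aux_eq1 h2 s C W hC0 hW0 hW1 hC3 hW3 h.symm)
  · intro h
    exact hs1 (aux_eq1 h2 s C (W ^ 2) hC0 hW20 hW21 hC3 hW23 h.symm)
  · intro h
    have e : C * W * W = C * W ^ 2 := by ring
    refine hs1 (aux_eq1 h2 s (C * W) W (mul_ne_zero hC0 hW0) hW0 hW1 ?_ hW3 ?_)
    · rw [mul_pow, hC3, hW3, mul_one]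
    · rw [e]; exact h.symm
  · exact aux_frob n C hC0 hCP
  · refine aux_frob n (C * W) (mul_ne_zero hC0 hW0) ?_
    rw [mul_pow, hCP, hWP, mul_one]
  · refine aux_frob n (C * W ^ 2) (mul_ne_zero hC0 hW20) ?_
    rw [mul_pow, hCP, one_mul, ← pow_mul, show 2 * (2 ^ n + 1) = (2 ^ n + 1) * 2 by ring,
      pow_mul, hWP, one_pow]
  · exact aux_root h2 s C hC0 hC3
  · refine aux_root h2 s (C * W) (mul_ne_zero hC0 hW0) ?_
    rw [mul_pow, hC3, hW3, mul_one]
  · refine aux_root h2 s (C * W ^ 2) (mul_ne_zero hC0 hW20) ?_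
    rw [mul_pow, hC3, hW23, mul_one]
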